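/- Let Q(r) = 1 - 1/r - 1/(2r^2) and L(u,r) = (1 - 1/r) u''(r) + (1/r^2) u'(r) + (1/r^2) u(r)(1 - u(r)^2). Then for all r ≥ 3, L(Q, r) = -2/r^4 + 2/r^5 + 3/(4 r^6) + 3/(4 r^7) + 1/(8 r^8) ≤ -1/r^4 < 0. -/

import Mathlib

open Real

theorem supersolution_Q
    (Q : ℝ → ℝ) (hQ : ∀ r, Q r = 1 - 1 / r - 1 / (2 * r ^ 2)) :
    ∀ r : ℝ, 3 ≤ r →
      (1 - 1 / r) * deriv (deriv Q) r + (1 / r ^ 2) * deriv Q r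
          + (1 / r ^ 2) * Q r * (1 - (Q r) ^ 2)
        = -2 / r ^ 4 + 2 / r ^ 5 + 3 / (4 * r ^ 6) + 3 / (4 * r ^ 7) + 1 / (8 * r ^ 8) ∧
      -2 / r ^ 4 + 2 / r ^ 5 + 3 / (4 * r ^ 6) + 3 / (4 * r ^ 7) + 1 / (8 * r ^ 8)
        ≤ -1 / r ^ 4 ∧
      -1 / r ^ 4 < 0 := by
  intro r hr
  have hr0 : r ≠ 0 := by intro h; rw [h] at hr; norm_num at hr
  have hrpos : (0:ℝ) < r := lt_of_lt_of_le (by norm_num) hr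
  have hQfun : Q = fun x : ℝ => 1 - x⁻¹ - (2 * x ^ 2)⁻¹ := by
    funext x; rw [hQ]; simp [one_div]
  -- first derivative of Q
  have hD : ∀ x : ℝ, x ≠ 0 → HasDerivAt Q (x⁻¹ ^ 2 + x⁻¹ ^ 3) x := by
    intro x hx
    rw [hQfun]
    have h1 : HasDerivAt (fun x : ℝ => x⁻¹) (-(x ^ 2)⁻¹) x := hasDerivAt_inv hx
    have h2 : HasDerivAt (fun x : ℝ => 2 * x ^ 2) (2 * (2 * x)) x := by
      simpa using ((hasDerivAt_pow 2 x).const_mul (2:ℝ))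
    have h3 : HasDerivAt (fun x : ℝ => (2 * x ^ 2)⁻¹)
        (-(2 * (2 * x)) / (2 * x ^ 2) ^ 2) x := h2.inv (by positivity)
    have := ((hasDerivAt_const x (1:ℝ)).sub h1).sub h3
    refine this.congr_deriv ?_
    field_simp
    ring
  have hderivQ : ∀ x : ℝ, x ≠ 0 → deriv Q x = x⁻¹ ^ 2 + x⁻¹ ^ 3 := fun x hx =>
    (hD x hx).deriv
  -- deriv Q agrees with explicit function near r
  have hEv : deriv Q =ᶠ[nhds r] fun x : ℝ => x⁻¹ ^ 2 + x⁻¹ ^ 3 := by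
    filter_upwards [eventually_ne_nhds hr0] with x hx using hderivQ x hx
  have hD2 : HasDerivAt (fun x : ℝ => x⁻¹ ^ 2 + x⁻¹ ^ 3)
      ((2 * r⁻¹ ^ 1 * (-(r ^ 2)⁻¹)) + (3 * r⁻¹ ^ 2 * (-(r ^ 2)⁻¹))) r := by
    exact ((hasDerivAt_inv hr0).pow 2).add ((hasDerivAt_inv hr0).pow 3)
  have hderiv2 : deriv (deriv Q) r
      = (2 * r⁻¹ ^ 1 * (-(r ^ 2)⁻¹)) + (3 * r⁻¹ ^ 2 * (-(r ^ 2)⁻¹)) := by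
    rw [hEv.deriv_eq]
    exact hD2.deriv
  refine ⟨?_, ?_, ?_⟩
  · rw [hderiv2, hderivQ r hr0, hQ r]
    field_simp
    ring
  · have key : -2 / r ^ 4 + 2 / r ^ 5 + 3 / (4 * r ^ 6) + 3 / (4 * r ^ 7) + 1 / (8 * r ^ 8)
        - (-1 / r ^ 4) = (-(8 * r ^ 4) + 16 * r ^ 3 + 6 * r ^ 2 + 6 * r + 1) / (8 * r ^ 8) := by
      field_simp
      ring
    have hnum : -(8 * r ^ 4) + 16 * r ^ 3 + 6 * r ^ 2 + 6 * r + 1 ≤ 0 := by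
      nlinarith [sq_nonneg r, sq_nonneg (r - 3), mul_pos hrpos hrpos]
    have hden : (0:ℝ) < 8 * r ^ 8 := by positivity
    have := div_nonpos_of_nonpos_of_nonneg hnum hden.le
    linarith [key ▸ this]
  · have h1 : (0:ℝ) < 1 / r ^ 4 := by positivity
    have : -1 / r ^ 4 = -(1 / r ^ 4) := by ring
    rw [this]; linarith
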